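/- Let u, v ∈ ℝ³ with u ≠ 0 and v − ⟨v, u/‖u‖⟩ (u/‖u‖) ≠ 0, and let O ∈ ℝ^{3×3} satisfy OᵀO = I and det(O) = −1. Then GS(O u, O v) = O · GS(u, v) · D, where D is the diagonal matrix diag(1, 1, −1); equivalently, the first two columns of GS(O u, O v) are O e₁ and O e₂ while the third column is −O e₃. In particular GS(O u, O v) ≠ O · GS(u, v), so the Gram–Schmidt local reference frame is not equivariant under reflections. -/
import Mathlib


open Matrix

/-- Euclidean norm on `Fin 3 → ℝ`. -/
noncomputable def euclNorm (a : Fin 3 → ℝ) : ℝ := Real.sqrt (a ⬝ᵥ a)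

/-- The Gram–Schmidt local reference frame: the `3 × 3` matrix with columns
`e₁ = u/‖u‖`, `e₂ = (v − ⟨v,e₁⟩e₁)/‖v − ⟨v,e₁⟩e₁‖`, `e₃ = e₁ × e₂`. -/
noncomputable def GS (u v : Fin 3 → ℝ) : Matrix (Fin 3) (Fin 3) ℝ :=
  let e₁ : Fin 3 → ℝ := (euclNorm u)⁻¹ • u
  let w : Fin 3 → ℝ := v - (v ⬝ᵥ e₁) • e₁
  let e₂ : Fin 3 → ℝ := (euclNorm w)⁻¹ • w
  let e₃ : Fin 3 → ℝ := crossProduct e₁ e₂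
  Matrix.of fun i j => ![e₁, e₂, e₃] j i

-- universal identity
lemma cross_mulVec_univ (M : Matrix (Fin 3) (Fin 3) ℝ) (a b : Fin 3 → ℝ) :
    crossProduct (M *ᵥ a) (M *ᵥ b) = (Matrix.adjugate M)ᵀ *ᵥ crossProduct a b := by
  funext i
  fin_cases i <;>
    simp [cross_apply, Matrix.mulVec, dotProduct, Fin.sum_univ_three,
      Matrix.adjugate_fin_three, Matrix.transpose_apply] <;> ring

lemma adj_eq (O : Matrix (Fin 3) (Fin 3) ℝ) (h1 : Oᵀ * O = 1) (h2 : O.det = -1) :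
    Matrix.adjugate O = -Oᵀ := by
  have h1' : O * Oᵀ = 1 := mul_eq_one_comm.mp h1
  calc Matrix.adjugate O = Matrix.adjugate O * (O * Oᵀ) := by rw [h1']; simp
    _ = (Matrix.adjugate O * O) * Oᵀ := by rw [Matrix.mul_assoc]
    _ = -Oᵀ := by rw [Matrix.adjugate_mul, h2]; simp

lemma dot_inv (O : Matrix (Fin 3) (Fin 3) ℝ) (h1 : Oᵀ * O = 1) (a b : Fin 3 → ℝ) :
    (O *ᵥ a) ⬝ᵥ (O *ᵥ b) = a ⬝ᵥ b := by
  rw [Matrix.dotProduct_mulVec, ← Matrix.vecMul_transpose, Matrix.vecMul_vecMul, h1,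
    Matrix.vecMul_one]

lemma euclNorm_mulVec (O : Matrix (Fin 3) (Fin 3) ℝ) (h1 : Oᵀ * O = 1) (a : Fin 3 → ℝ) :
    euclNorm (O *ᵥ a) = euclNorm a := by
  unfold euclNorm; rw [dot_inv O h1]

lemma dot_self_pos (a : Fin 3 → ℝ) (h : a ≠ 0) : 0 < a ⬝ᵥ a := by
  have hnn : 0 ≤ a ⬝ᵥ a := by
    simp only [dotProduct, Fin.sum_univ_three]
    nlinarith [mul_self_nonneg (a 0), mul_self_nonneg (a 1), mul_self_nonneg (a 2)]
  rcases lt_or_eq_of_le hnn with h' | h'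
  · exact h'
  · exact absurd (dotProduct_self_eq_zero.mp h'.symm) h

lemma dot_self_unit (a : Fin 3 → ℝ) (h : a ≠ 0) :
    ((euclNorm a)⁻¹ • a) ⬝ᵥ ((euclNorm a)⁻¹ • a) = 1 := by
  have h0 := dot_self_pos a h
  have hs : Real.sqrt (a ⬝ᵥ a) * Real.sqrt (a ⬝ᵥ a) = a ⬝ᵥ a := Real.mul_self_sqrt h0.le
  rw [smul_dotProduct, dotProduct_smul, smul_eq_mul, smul_eq_mul]
  unfold euclNorm
  rw [← mul_assoc, ← mul_inv, hs, inv_mul_cancel₀ h0.ne']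

lemma lagrange (a b : Fin 3 → ℝ) :
    crossProduct a b ⬝ᵥ crossProduct a b = (a ⬝ᵥ a) * (b ⬝ᵥ b) - (a ⬝ᵥ b)^2 := by
  simp [cross_apply, dotProduct, Fin.sum_univ_three]; ring

lemma col_lemma2 (O : Matrix (Fin 3) (Fin 3) ℝ) (a b c : Fin 3 → ℝ) :
    O * (Matrix.of fun i j => ![a, b, c] j i)
      = Matrix.of fun i j => ![O *ᵥ a, O *ᵥ b, O *ᵥ c] j i := by
  ext i j
  fin_cases j <;>
    simp [Matrix.mul_apply, Matrix.mulVec, dotProduct, Fin.sum_univ_three]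

lemma col_lemma (O : Matrix (Fin 3) (Fin 3) ℝ) (a b c : Fin 3 → ℝ) :
    O * (Matrix.of fun i j => ![a, b, c] j i) * Matrix.diagonal ![(1:ℝ), 1, -1]
      = Matrix.of fun i j => ![O *ᵥ a, O *ᵥ b, -(O *ᵥ c)] j i := by
  ext i j
  fin_cases j <;>
    simp [Matrix.mul_apply, Matrix.mulVec, dotProduct, Fin.sum_univ_three,
      Matrix.diagonal]


/-- For `u ≠ 0`, `v − ⟨v, u/‖u‖⟩(u/‖u‖) ≠ 0` and a reflection `O`
(`Oᵀ * O = 1`, `det O = -1`), one has `GS (O u) (O v) = O * GS u v * diag(1,1,−1)`,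
and in particular `GS (O u) (O v) ≠ O * GS u v`: the Gram–Schmidt local
reference frame is not equivariant under reflections. -/
theorem GS_not_equivariant_reflection
    (u v : Fin 3 → ℝ) (hu : u ≠ 0)
    (hw : v - (v ⬝ᵥ ((euclNorm u)⁻¹ • u)) • ((euclNorm u)⁻¹ • u) ≠ 0)
    (O : Matrix (Fin 3) (Fin 3) ℝ) (h1 : Oᵀ * O = 1) (h2 : O.det = -1) :
    GS (O.mulVec u) (O.mulVec v)
      = O * GS u v * Matrix.diagonal ![(1 : ℝ), 1, -1]
    ∧ GS (O.mulVec u) (O.mulVec v) ≠ O * GS u v := by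
  set e₁ : Fin 3 → ℝ := (euclNorm u)⁻¹ • u with he₁
  set w : Fin 3 → ℝ := v - (v ⬝ᵥ e₁) • e₁ with hwd
  set e₂ : Fin 3 → ℝ := (euclNorm w)⁻¹ • w with he₂
  set e₃ : Fin 3 → ℝ := crossProduct e₁ e₂ with he₃
  have A1 : (euclNorm (O *ᵥ u))⁻¹ • (O *ᵥ u) = O *ᵥ e₁ := by
    rw [he₁, euclNorm_mulVec O h1, Matrix.mulVec_smul]
  have A2 : O *ᵥ v - ((O *ᵥ v) ⬝ᵥ (O *ᵥ e₁)) • (O *ᵥ e₁) = O *ᵥ w := by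
    rw [dot_inv O h1, hwd]
    funext i
    simp [Matrix.mulVec, dotProduct, Fin.sum_univ_three, he₁]
    ring
  have A3 : (euclNorm (O *ᵥ w))⁻¹ • (O *ᵥ w) = O *ᵥ e₂ := by
    rw [he₂, euclNorm_mulVec O h1, Matrix.mulVec_smul]
  have A4 : crossProduct (O *ᵥ e₁) (O *ᵥ e₂) = -(O *ᵥ e₃) := by
    rw [cross_mulVec_univ, adj_eq O h1 h2, he₃]
    simp [Matrix.neg_mulVec]
  have key : GS (O *ᵥ u) (O *ᵥ v)
      = Matrix.of fun i j => ![O *ᵥ e₁, O *ᵥ e₂, -(O *ᵥ e₃)] j i := by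
    simp only [GS]
    rw [A1, A2, A3, A4]
  have hGS : GS u v = Matrix.of fun i j => ![e₁, e₂, e₃] j i := rfl
  have part1 : GS (O *ᵥ u) (O *ᵥ v) = O * GS u v * Matrix.diagonal ![(1 : ℝ), 1, -1] := by
    rw [key, hGS, col_lemma]
  refine ⟨part1, fun hcontra => ?_⟩
  have heq := key.symm.trans hcontra
  rw [hGS, col_lemma2] at heq
  have hOe3 : O *ᵥ e₃ = 0 := by
    funext i
    have h := congrFun (congrFun heq i) (2 : Fin 3)
    simp at h
    show (O *ᵥ e₃) i = 0
    linarith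
  have he3z : e₃ = 0 := by
    have h := congrArg (fun x => Oᵀ *ᵥ x) hOe3
    simpa [Matrix.mulVec_mulVec, h1] using h
  have hd1 : e₁ ⬝ᵥ e₁ = 1 := dot_self_unit u hu
  have hd2 : e₂ ⬝ᵥ e₂ = 1 := dot_self_unit w hw
  have h0 : e₁ ⬝ᵥ w = 0 := by
    rw [hwd, dotProduct_sub, dotProduct_smul, hd1, smul_eq_mul, mul_one,
      dotProduct_comm e₁ v, sub_self]
  have hd12 : e₁ ⬝ᵥ e₂ = 0 := by
    rw [he₂, dotProduct_smul, h0, smul_zero]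
  have hl := lagrange e₁ e₂
  rw [← he₃, he3z, hd1, hd2, hd12] at hl
  simp at hl
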